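/- Let $(x_t)_{t\ge0}$ be a sequence of nonnegative reals with $x_0 = 0$ satisfying $x_t \le (1-\alpha n\lambda_0)x_{t-1} + \alpha\eta + \alpha n\gamma x_{t-1}^2$ for all $t\ge1$, where $\alpha, n, \lambda_0, \gamma, \eta > 0$, $\gamma < 2\lambda_0$, $\alpha n\lambda_0 \le 1$, and $n \ge 4\eta/(2\lambda_0-\gamma)$. Then $x_t \le \frac{2\eta}{(2\lambda_0-\gamma)n}$ for all $t\ge0$. -/

import Mathlib

/-- Scalar recursion underlying Step 1 of the GD approximation-error theorem. -/
theorem stmt0 (x : ℕ → ℝ) (α n lam0 γ η : ℝ)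
    (hα : 0 < α) (hn : 0 < n) (hlam : 0 < lam0) (hγ : 0 < γ) (hη : 0 < η)
    (hγlam : γ < 2 * lam0) (hstep : α * n * lam0 ≤ 1)
    (hN : n ≥ 4 * η / (2 * lam0 - γ))
    (hx0 : x 0 = 0) (hnn : ∀ t, 0 ≤ x t)
    (hrec : ∀ t ≥ 1, x t ≤ (1 - α * n * lam0) * x (t - 1) + α * η
        + α * n * γ * (x (t - 1)) ^ 2) :
    ∀ t, x t ≤ 2 * η / ((2 * lam0 - γ) * n) := by
  have hd : 0 < 2 * lam0 - γ := by linarith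
  have hdn : 0 < (2 * lam0 - γ) * n := by positivity
  have hN' : 4 * η ≤ (2 * lam0 - γ) * n := by
    have := (div_le_iff₀ hd).mp hN
    linarith [this]
  intro t
  induction t with
  | zero => rw [hx0]; positivity
  | succ k ih =>
    have hr := hrec (k + 1) (Nat.le_add_left 1 k)
    simp only [Nat.add_sub_cancel] at hr
    set B := 2 * η / ((2 * lam0 - γ) * n) with hB
    have hBpos : 0 < B := by positivity
    have hBeq : B * ((2 * lam0 - γ) * n) = 2 * η := by
      rw [hB, div_mul_cancel₀ _ hdn.ne']
    have hxk := hnn k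
    have h1 : (1 - α * n * lam0) * x k + α * η + α * n * γ * (x k) ^ 2
        ≤ (1 - α * n * lam0) * B + α * η + α * n * γ * B ^ 2 := by
      have h0 : 0 ≤ 1 - α * n * lam0 := by linarith
      have hsq : (x k)^2 ≤ B^2 := by nlinarith
      nlinarith [mul_pos hα (mul_pos hn hγ)]
    have h2 : (1 - α * n * lam0) * B + α * η + α * n * γ * B ^ 2 ≤ B := by
      have key : α * η + α * n * γ * B ^ 2 ≤ α * n * lam0 * B := by
        have hBhalf : B ≤ 1/2 := by
          rw [hB, div_le_iff₀ hdn]; linarith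
        nlinarith [mul_pos hα (mul_pos hn (mul_pos hγ hBpos)), hBeq]
      linarith
    calc x (k+1) ≤ _ := hr
      _ ≤ _ := h1
      _ ≤ B := h2
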